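/- Fix k ≥ 1. The set of pairs (n, c), where n ∈ ℕ and c is a maximal Riviera configuration of length n having exactly k occupied lots, is finite, and its cardinality equals the number of closed walks of length k+4 on the graph P starting and ending at vertex 0, i.e. the number of functions w : {0, 1, …, k+4} → {0, 1, 2} with w(0) = 0, w(k+4) = 0, and (w(t), w(t+1)) an edge of P for every 0 ≤ t < k+4. -/

import Mathlib

/-- A Riviera configuration of length `n`: zero-padded outside `{0, …, n−1}`. -/
def RivieraConfig (n : ℕ) (c : ℤ → Bool) : Prop :=
  ∀ j : ℤ, j < 0 ∨ (n : ℤ) ≤ j → c j = false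

/-- Permissibility: no occupied lot has both neighbors occupied. -/
def RivieraPermissible (c : ℤ → Bool) : Prop :=
  ¬ ∃ i : ℤ, c (i - 1) = true ∧ c i = true ∧ c (i + 1) = true

/-- Maximality: permissible and no house can be added. -/
def RivieraMaximal (n : ℕ) (c : ℤ → Bool) : Prop :=
  RivieraPermissible c ∧
    ∀ j : ℤ, 0 ≤ j → j < (n : ℤ) → c j = false →
      ¬ RivieraPermissible (Function.update c j true)

/-- The number of occupied lots of a configuration of length `n`. -/
noncomputable def rivieraOccupancy (n : ℕ) (c : ℤ → Bool) : ℕ :=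
  ((Finset.Ico (0 : ℤ) (n : ℤ)).filter fun j => c j = true).card

/-- The edge relation of the path graph on `{0,1,2}` with a loop added at `2`. -/
def PEdge (a b : Fin 3) : Prop :=
  (a = 0 ∧ b = 1) ∨ (a = 1 ∧ b = 0) ∨ (a = 1 ∧ b = 2) ∨ (a = 2 ∧ b = 1) ∨ (a = 2 ∧ b = 2)


namespace RivProof

/-- padded lookup -/
def pad (w : List Bool) (i : ℕ) : Bool := w.getD i false

lemma pad_eq_false_of_le {w : List Bool} {i : ℕ} (h : w.length ≤ i) : pad w i = false := by
  simp [pad, List.getD_eq_default, List.getElem?_eq_none h]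

lemma lt_length_of_pad_eq_true {w : List Bool} {i : ℕ} (h : pad w i = true) : i < w.length := by
  by_contra hc
  rw [pad_eq_false_of_le (le_of_not_gt hc)] at h
  exact Bool.false_ne_true h

lemma pad_eq_getElem {w : List Bool} {i : ℕ} (h : i < w.length) : pad w i = w[i] := by
  simp [pad, List.getD_eq_getElem?_getD, List.getElem?_eq_getElem h]

lemma pad_append (v s : List Bool) (i : ℕ) :
    pad (v ++ s) i = if i < v.length then pad v i else pad s (i - v.length) := by
  split_ifs with h
  · rw [pad_eq_getElem (by simp; omega), pad_eq_getElem h]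
    exact List.getElem_append_left h
  · push_neg at h
    rcases lt_or_ge (i - v.length) s.length with h2 | h2
    · rw [pad_eq_getElem (by simp; omega), pad_eq_getElem h2]
      rw [List.getElem_append_right h]
    · rw [pad_eq_false_of_le (by simp; omega), pad_eq_false_of_le h2]

lemma pad_append_left {v : List Bool} (s : List Bool) {i : ℕ} (h : i < v.length) :
    pad (v ++ s) i = pad v i := by rw [pad_append]; simp [h]

lemma pad_append_right (v s : List Bool) {i : ℕ} (h : v.length ≤ i) :
    pad (v ++ s) i = pad s (i - v.length) := by rw [pad_append]; simp [Nat.not_lt.2 h]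

end RivProof

namespace RivProof

def Perm (w : List Bool) : Prop :=
  ∀ i : ℕ, ¬(pad w i = true ∧ pad w (i+1) = true ∧ pad w (i+2) = true)

def Wit (w : List Bool) (j : ℕ) : Prop :=
  (pad w (j+1) = true ∧ pad w (j+2) = true) ∨
  (1 ≤ j ∧ pad w (j-1) = true ∧ pad w (j+1) = true) ∨
  (2 ≤ j ∧ pad w (j-2) = true ∧ pad w (j-1) = true)

def MaxW (w : List Bool) : Prop :=
  Perm w ∧ ∀ j, j < w.length → pad w j = false → Wit w j

def EndB (w : List Bool) : Prop := pad w (w.length - 1) = true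

def End2 (w : List Bool) : Prop :=
  2 ≤ w.length ∧ pad w (w.length - 1) = true ∧ pad w (w.length - 2) = true

def End1 (w : List Bool) : Prop := EndB w ∧ ¬ End2 w

def EndZ (w : List Bool) : Prop := w ≠ [] ∧ pad w (w.length - 1) = false

instance (w : List Bool) (j : ℕ) : Decidable (Wit w j) := by unfold Wit; infer_instance

lemma perm_iff (w : List Bool) :
    Perm w ↔ ∀ i, i < w.length → ¬(pad w i = true ∧ pad w (i+1) = true ∧ pad w (i+2) = true) := by
  constructor
  · intro h i _; exact h i
  · intro h i hi
    exact h i (lt_length_of_pad_eq_true hi.1) hi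

lemma maxW_iff (w : List Bool) :
    MaxW w ↔ (∀ i, i < w.length → ¬(pad w i = true ∧ pad w (i+1) = true ∧ pad w (i+2) = true)) ∧
      ∀ j, j < w.length → pad w j = false → Wit w j := by
  unfold MaxW; rw [perm_iff]

instance (w : List Bool) : Decidable (Perm w) :=
  decidable_of_iff _ (perm_iff w).symm

instance (w : List Bool) : Decidable (MaxW w) :=
  decidable_of_iff _ (maxW_iff w).symm

lemma wit_mono {v w : List Bool} (h : ∀ i, pad v i = true → pad w i = true) {j : ℕ}
    (hw : Wit v j) : Wit w j := by
  rcases hw with ⟨h1, h2⟩ | ⟨h0, h1, h2⟩ | ⟨h0, h1, h2⟩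
  · exact Or.inl ⟨h _ h1, h _ h2⟩
  · exact Or.inr (Or.inl ⟨h0, h _ h1, h _ h2⟩)
  · exact Or.inr (Or.inr ⟨h0, h _ h1, h _ h2⟩)

lemma perm_anti {v w : List Bool} (h : ∀ i, pad v i = true → pad w i = true)
    (hw : Perm w) : Perm v := by
  intro i ⟨h1, h2, h3⟩
  exact hw i ⟨h _ h1, h _ h2, h _ h3⟩

lemma pad_prefix_eq (v s : List Bool) {i : ℕ} (h : i < v.length) :
    pad (v ++ s) i = pad v i := pad_append_left s h

lemma pad_prefix_mono (v s : List Bool) : ∀ i, pad v i = true → pad (v ++ s) i = true := by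
  intro i h
  rw [pad_append_left s (lt_length_of_pad_eq_true h)]; exact h

/-- stripping a suffix whose first char is `false` preserves witnesses of positions inside `v` -/
lemma wit_strip {v s : List Bool} (hs : pad s 0 = false) {j : ℕ} (hj : j < v.length)
    (hw : Wit (v ++ s) j) : Wit v j := by
  have hlen : pad (v ++ s) v.length = false := by
    rw [pad_append_right v s le_rfl]; simpa using hs
  rcases hw with ⟨h1, h2⟩ | ⟨h0, h1, h2⟩ | ⟨h0, h1, h2⟩
  · -- j+1, j+2
    have hj1 : j + 1 < v.length := by
      rcases lt_or_ge (j+1) v.length with h | h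
      · exact h
      · have : j + 1 = v.length := by omega
        rw [this] at h1; rw [h1] at hlen; exact absurd hlen (by simp)
    have hj2 : j + 2 < v.length := by
      rcases lt_or_ge (j+2) v.length with h | h
      · exact h
      · have : j + 2 = v.length := by omega
        rw [this] at h2; rw [h2] at hlen; exact absurd hlen (by simp)
    exact Or.inl ⟨by rwa [pad_append_left s hj1] at h1, by rwa [pad_append_left s hj2] at h2⟩
  · have hj1 : j + 1 < v.length := by
      rcases lt_or_ge (j+1) v.length with h | h
      · exact h
      · have : j + 1 = v.length := by omega
        rw [this] at h2; rw [h2] at hlen; exact absurd hlen (by simp)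
    exact Or.inr (Or.inl ⟨h0, by rwa [pad_append_left s (by omega)] at h1,
      by rwa [pad_append_left s hj1] at h2⟩)
  · exact Or.inr (Or.inr ⟨h0, by rwa [pad_append_left s (by omega)] at h1,
      by rwa [pad_append_left s (by omega)] at h2⟩)

lemma maxW_strip {v s : List Bool} (hs : pad s 0 = false) (h : MaxW (v ++ s)) : MaxW v := by
  refine ⟨perm_anti (pad_prefix_mono v s) h.1, ?_⟩
  intro j hj hp
  have hf : pad (v ++ s) j = false := by rwa [pad_append_left s hj]
  exact wit_strip hs hj (h.2 j (by simp; omega) hf)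

end RivProof

namespace RivProof

lemma perm_append {v s : List Bool} (hv : Perm v) (hs0 : pad s 0 = false) (hss : Perm s) :
    Perm (v ++ s) := by
  intro i ⟨h1, h2, h3⟩
  rcases lt_or_ge (i + 2) v.length with h | h
  · exact hv i ⟨by rwa [pad_append_left s (by omega)] at h1,
      by rwa [pad_append_left s (by omega)] at h2,
      by rwa [pad_append_left s (by omega)] at h3⟩
  · rcases lt_or_ge i v.length with h' | h'
    · -- crossing: one of i, i+1, i+2 equals v.length, whose value is pad s 0 = false
      have hlen : pad (v ++ s) v.length = false := by
        rw [pad_append_right v s le_rfl]; simpa using hs0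
      rcases Nat.lt_or_ge (i+1) v.length with h'' | h''
      · have : i + 2 = v.length := by omega
        rw [this, hlen] at h3; exact Bool.false_ne_true h3
      · rcases Nat.eq_or_lt_of_le h'' with he | hl
        · rw [← he, hlen] at h2; exact Bool.false_ne_true h2
        · have : i = v.length := by omega
          rw [this, hlen] at h1; exact Bool.false_ne_true h1
    · refine hss (i - v.length) ⟨?_, ?_, ?_⟩
      · rwa [pad_append_right v s h'] at h1
      · rw [pad_append_right v s (by omega)] at h2
        rwa [show i + 1 - v.length = i - v.length + 1 by omega] at h2
      · rw [pad_append_right v s (by omega)] at h3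
        rwa [show i + 2 - v.length = i - v.length + 2 by omega] at h3

lemma end2_parts {v : List Bool} (h : End2 v) :
    2 ≤ v.length ∧ pad v (v.length - 1) = true ∧ pad v (v.length - 2) = true := h

lemma endB_pos {v : List Bool} (h : EndB v) : 1 ≤ v.length := by
  have := lt_length_of_pad_eq_true h
  omega

lemma maxW_append_f {v : List Bool} (hv : MaxW v) (h2 : End2 v) :
    MaxW (v ++ [false]) := by
  obtain ⟨hl2, he1, he2⟩ := h2
  refine ⟨perm_append hv.1 rfl (by decide), ?_⟩
  intro j hj hp
  simp only [List.length_append, List.length_cons, List.length_nil] at hj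
  rcases lt_or_ge j v.length with h | h
  · exact wit_mono (pad_prefix_mono v _) (hv.2 j h (by rwa [pad_append_left _ h] at hp))
  · have hje : j = v.length := by omega
    subst hje
    refine Or.inr (Or.inr ⟨by omega, ?_, ?_⟩)
    · rw [pad_append_left _ (by omega)]
      rwa [show v.length - 2 = v.length - 2 from rfl] at he2
    · rw [pad_append_left _ (by omega)]
      rwa [show v.length - 1 = v.length - 1 from rfl] at he1

lemma maxW_append_ft {v : List Bool} (hv : MaxW v) (hB : EndB v) :
    MaxW (v ++ [false, true]) := by
  have hpos := endB_pos hB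
  refine ⟨perm_append hv.1 rfl (by decide), ?_⟩
  intro j hj hp
  simp only [List.length_append, List.length_cons, List.length_nil] at hj
  rcases lt_or_ge j v.length with h | h
  · exact wit_mono (pad_prefix_mono v _) (hv.2 j h (by rwa [pad_append_left _ h] at hp))
  · have : j = v.length ∨ j = v.length + 1 := by omega
    rcases this with hje | hje
    · subst hje
      refine Or.inr (Or.inl ⟨by omega, ?_, ?_⟩)
      · rw [pad_append_left _ (by omega)]; exact hB
      · rw [pad_append_right v _ (by omega), show v.length + 1 - v.length = 1 by omega]; rfl
    · subst hje
      rw [pad_append_right v _ (by omega), show v.length + 1 - v.length = 1 by omega] at hp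
      exact absurd hp (by decide)

lemma maxW_append_ftt {v : List Bool} (hv : MaxW v) (hB : EndB v) :
    MaxW (v ++ [false, true, true]) := by
  have hpos := endB_pos hB
  refine ⟨perm_append hv.1 rfl (by decide), ?_⟩
  intro j hj hp
  simp only [List.length_append, List.length_cons, List.length_nil] at hj
  rcases lt_or_ge j v.length with h | h
  · exact wit_mono (pad_prefix_mono v _) (hv.2 j h (by rwa [pad_append_left _ h] at hp))
  · have : j = v.length ∨ j = v.length + 1 ∨ j = v.length + 2 := by omega
    rcases this with hje | hje | hje
    · subst hje
      refine Or.inr (Or.inl ⟨by omega, ?_, ?_⟩)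
      · rw [pad_append_left _ (by omega)]; exact hB
      · rw [pad_append_right v _ (by omega), show v.length + 1 - v.length = 1 by omega]; rfl
    · subst hje
      rw [pad_append_right v _ (by omega), show v.length + 1 - v.length = 1 by omega] at hp
      exact absurd hp (by decide)
    · subst hje
      rw [pad_append_right v _ (by omega), show v.length + 2 - v.length = 2 by omega] at hp
      exact absurd hp (by decide)

lemma maxW_append_fftt {v : List Bool} (hv : MaxW v) (h2 : End2 v) :
    MaxW (v ++ [false, false, true, true]) := by
  obtain ⟨hl2, he1, he2⟩ := h2
  refine ⟨perm_append hv.1 rfl (by decide), ?_⟩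
  intro j hj hp
  simp only [List.length_append, List.length_cons, List.length_nil] at hj
  rcases lt_or_ge j v.length with h | h
  · exact wit_mono (pad_prefix_mono v _) (hv.2 j h (by rwa [pad_append_left _ h] at hp))
  · have : j = v.length ∨ j = v.length + 1 ∨ j = v.length + 2 ∨ j = v.length + 3 := by omega
    rcases this with hje | hje | hje | hje
    · subst hje
      refine Or.inr (Or.inr ⟨by omega, ?_, ?_⟩)
      · rw [pad_append_left _ (by omega)]; exact he2
      · rw [pad_append_left _ (by omega)]; exact he1
    · subst hje
      refine Or.inl ⟨?_, ?_⟩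
      · rw [pad_append_right v _ (by omega), show v.length + 1 + 1 - v.length = 2 by omega]; rfl
      · rw [pad_append_right v _ (by omega), show v.length + 1 + 2 - v.length = 3 by omega]; rfl
    · subst hje
      rw [pad_append_right v _ (by omega), show v.length + 2 - v.length = 2 by omega] at hp
      exact absurd hp (by decide)
    · subst hje
      rw [pad_append_right v _ (by omega), show v.length + 3 - v.length = 3 by omega] at hp
      exact absurd hp (by decide)

end RivProof

namespace RivProof

/-- the set of occupied positions as a Finset -/
def trues (w : List Bool) : Finset ℕ := (Finset.range w.length).filter (fun i => pad w i = true)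

lemma count_eq_card_trues (w : List Bool) : w.count true = (trues w).card := by
  induction w using List.reverseRecOn with
  | nil => simp [trues]
  | append_singleton v b ih =>
    rw [List.count_append]
    have hsplit : trues (v ++ [b]) =
        (if b = true then insert v.length (trues v) else trues v) := by
      unfold trues
      ext i
      simp only [List.length_append, List.length_cons, List.length_nil, Finset.mem_filter,
        Finset.mem_range]
      constructor
      · rintro ⟨hi, hp⟩
        rcases lt_or_ge i v.length with h | h
        · rw [pad_append_left _ h] at hp
          split_ifs with hb
          · simp only [Finset.mem_insert, Finset.mem_filter, Finset.mem_range]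
            exact Or.inr ⟨h, hp⟩
          · exact Finset.mem_filter.2 ⟨Finset.mem_range.2 h, hp⟩
        · have : i = v.length := by omega
          subst this
          rw [pad_append_right v _ le_rfl, Nat.sub_self] at hp
          have hb : b = true := by simpa [pad] using hp
          simp [hb]
      · intro hi
        split_ifs at hi with hb
        · rcases Finset.mem_insert.1 hi with he | hm
          · subst he
            refine ⟨by omega, ?_⟩
            rw [pad_append_right v _ le_rfl, Nat.sub_self]
            simpa [pad] using hb
          · obtain ⟨h1, h2⟩ := Finset.mem_filter.1 hm
            rw [Finset.mem_range] at h1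
            exact ⟨by omega, by rwa [pad_append_left _ h1]⟩
        · obtain ⟨h1, h2⟩ := Finset.mem_filter.1 hi
          rw [Finset.mem_range] at h1
          exact ⟨by omega, by rwa [pad_append_left _ h1]⟩
    rw [hsplit, ih]
    cases b
    · simp
    · rw [if_pos rfl, Finset.card_insert_of_notMem (by simp [trues])]
      simp

lemma mem_trues {w : List Bool} {i : ℕ} : i ∈ trues w ↔ pad w i = true := by
  constructor
  · intro h; exact (Finset.mem_filter.1 h).2
  · intro h; exact Finset.mem_filter.2 ⟨Finset.mem_range.2 (lt_length_of_pad_eq_true h), h⟩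

lemma two_trues {w : List Bool} {i j : ℕ} (hij : i ≠ j) (hi : pad w i = true)
    (hj : pad w j = true) : 2 ≤ w.count true := by
  rw [count_eq_card_trues]
  calc 2 = ({i, j} : Finset ℕ).card := by rw [Finset.card_pair hij]
  _ ≤ (trues w).card := by
      apply Finset.card_le_card
      intro x hx
      rcases Finset.mem_insert.1 hx with h | h
      · subst h; exact mem_trues.2 hi
      · rw [Finset.mem_singleton.1 h]; exact mem_trues.2 hj

lemma three_trues {w : List Bool} {i j l : ℕ} (h1 : i ≠ j) (h2 : i ≠ l) (h3 : j ≠ l)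
    (hi : pad w i = true) (hj : pad w j = true) (hl : pad w l = true) : 3 ≤ w.count true := by
  rw [count_eq_card_trues]
  calc 3 = ({i, j, l} : Finset ℕ).card := by
        rw [Finset.card_insert_of_notMem (by simp [h1, h2]), Finset.card_pair h3]
  _ ≤ (trues w).card := by
      apply Finset.card_le_card
      intro x hx
      simp only [Finset.mem_insert, Finset.mem_singleton] at hx
      rcases hx with h | h | h <;> subst h
      · exact mem_trues.2 hi
      · exact mem_trues.2 hj
      · exact mem_trues.2 hl

/-- reconstruction: a word equals its prefix plus a concrete suffix read off from pads -/
lemma eq_take_append (w s : List Bool) (m : ℕ) (hm : m + s.length = w.length)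
    (hp : ∀ i, i < s.length → pad w (m + i) = pad s i) :
    w = w.take m ++ s := by
  conv_lhs => rw [← List.take_append_drop m w]
  congr 1
  apply List.ext_getElem
  · simp; omega
  · intro i hi1 hi2
    rw [List.getElem_drop]
    have h1 : m + i < w.length := by simp at hi1; omega
    rw [← pad_eq_getElem h1, ← pad_eq_getElem hi2]
    exact hp i hi2

lemma length_take_sub (w : List Bool) (m : ℕ) : (w.take (w.length - m)).length = w.length - m := by
  simp

end RivProof

namespace RivProof

def Lall (k : ℕ) : Set (List Bool) := {w | MaxW w ∧ w.count true = k}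
def LB (k : ℕ) : Set (List Bool) := {w | MaxW w ∧ w.count true = k ∧ EndB w}
def L1 (k : ℕ) : Set (List Bool) := {w | MaxW w ∧ w.count true = k ∧ End1 w}
def L2 (k : ℕ) : Set (List Bool) := {w | MaxW w ∧ w.count true = k ∧ End2 w}
def LZ (k : ℕ) : Set (List Bool) := {w | MaxW w ∧ w.count true = k ∧ EndZ w}

lemma length_le_of_maxW {w : List Bool} (h : MaxW w) : w.length ≤ 3 * w.count true + 2 := by
  by_contra hc
  push_neg at hc
  set k := w.count true with hk
  -- for every i ≤ k, there is a true in [3i, 3i+2]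
  have key : ∀ i, i ≤ k → ∃ t, 3 * i ≤ t ∧ t ≤ 3 * i + 2 ∧ pad w t = true := by
    intro i hi
    by_contra hno
    push_neg at hno
    have f0 : pad w (3*i) = false := by
      cases hv : pad w (3*i)
      · rfl
      · exact absurd hv (by have := hno (3*i) le_rfl (by omega); simp [this])
    have f1 : pad w (3*i+1) = false := by
      cases hv : pad w (3*i+1)
      · rfl
      · exact absurd hv (by have := hno (3*i+1) (by omega) (by omega); simp [this])
    have f2 : pad w (3*i+2) = false := by
      cases hv : pad w (3*i+2)
      · rfl
      · exact absurd hv (by have := hno (3*i+2) (by omega) (by omega); simp [this])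
    have hw := h.2 (3*i+1) (by omega) f1
    rcases hw with ⟨h1, h2⟩ | ⟨h0, h1, h2⟩ | ⟨h0, h1, h2⟩
    · rw [show 3*i+1+1 = 3*i+2 by omega] at h1
      rw [f2] at h1; exact Bool.false_ne_true h1
    · rw [show 3*i+1-1 = 3*i by omega] at h1
      rw [f0] at h1; exact Bool.false_ne_true h1
    · rw [show 3*i+1-1 = 3*i by omega] at h2
      rw [f0] at h2; exact Bool.false_ne_true h2
  choose f hf1 hf2 hf3 using key
  have hinj : ∀ i (hi : i ≤ k) j (hj : j ≤ k), f i hi = f j hj → i = j := by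
    intro i hi j hj he
    have a1 := hf1 i hi; have a2 := hf2 i hi
    have b1 := hf1 j hj; have b2 := hf2 j hj
    omega
  -- injection from range (k+1) into trues w
  have hcard : k + 1 ≤ (trues w).card := by
    have := Finset.card_le_card_of_injOn (fun i => if hi : i ≤ k then f i hi else 0)
      (s := Finset.range (k+1)) (t := trues w) ?_ ?_
    · simpa using this
    · intro i hi
      rw [Finset.mem_coe, Finset.mem_range] at hi
      have hik : i ≤ k := by omega
      simp only [dif_pos hik]
      exact mem_trues.2 (hf3 i hik)
    · intro i hi j hj he
      simp only [Finset.mem_coe, Finset.mem_range] at hi hj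
      have hik : i ≤ k := by omega
      have hjk : j ≤ k := by omega
      simp only [dif_pos hik, dif_pos hjk] at he
      exact hinj i hik j hjk he
  rw [← count_eq_card_trues, ← hk] at hcard
  omega

lemma finite_Lall (k : ℕ) : (Lall k).Finite := by
  apply Set.Finite.subset (List.finite_length_le Bool (3 * k + 2))
  intro w hw
  have := length_le_of_maxW hw.1
  rw [hw.2] at this
  exact this

end RivProof

namespace RivProof

lemma pad_take {w : List Bool} {m i : ℕ} (h : i < m) : pad (w.take m) i = pad w i := by
  rcases lt_or_ge i w.length with hl | hl
  · rw [pad_eq_getElem (by simp; omega), pad_eq_getElem hl]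
    exact List.getElem_take
  · rw [pad_eq_false_of_le (by simp; omega), pad_eq_false_of_le hl]

lemma count_pos_ne_nil {w : List Bool} {k : ℕ} (hk : 1 ≤ k) (h : w.count true = k) :
    1 ≤ w.length := by
  have := (List.count_le_length : w.count true ≤ w.length)
  omega

lemma partition_Lall {k : ℕ} (hk : 1 ≤ k) : Lall k = (L1 k ∪ L2 k) ∪ LZ k := by
  ext w
  simp only [Lall, L1, L2, LZ, Set.mem_setOf_eq, Set.mem_union]
  constructor
  · rintro ⟨hm, hc⟩
    have hlen : 1 ≤ w.length := count_pos_ne_nil hk hc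
    cases hlast : pad w (w.length - 1)
    · exact Or.inr ⟨hm, hc, fun hnil => by simp [hnil] at hlen, hlast⟩
    · by_cases h2 : End2 w
      · exact Or.inl (Or.inr ⟨hm, hc, h2⟩)
      · exact Or.inl (Or.inl ⟨hm, hc, hlast, h2⟩)
  · rintro ((⟨hm, hc, _⟩ | ⟨hm, hc, _⟩) | ⟨hm, hc, _⟩) <;> exact ⟨hm, hc⟩

lemma LB_eq {k : ℕ} : LB k = L1 k ∪ L2 k := by
  ext w
  simp only [LB, L1, L2, Set.mem_setOf_eq, Set.mem_union]
  constructor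
  · rintro ⟨hm, hc, hB⟩
    by_cases h2 : End2 w
    · exact Or.inr ⟨hm, hc, h2⟩
    · exact Or.inl ⟨hm, hc, hB, h2⟩
  · rintro (⟨hm, hc, hB, _⟩ | ⟨hm, hc, h2⟩)
    · exact ⟨hm, hc, hB⟩
    · exact ⟨hm, hc, h2.2.1⟩

lemma disj_L1_L2 (k k' : ℕ) : Disjoint (L1 k) (L2 k') := by
  rw [Set.disjoint_left]
  rintro w ⟨_, _, _, h2⟩ ⟨_, _, h2'⟩
  exact h2 h2'

lemma disj_LB_LZ (k k' : ℕ) : Disjoint (L1 k ∪ L2 k) (LZ k') := by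
  rw [Set.disjoint_left]
  rintro w hw ⟨_, _, _, hz⟩
  rcases hw with ⟨_, _, hB, _⟩ | ⟨_, _, _, hB, _⟩ <;> rw [hB] at hz <;> simp at hz

/-- decomposition of LZ -/
lemma LZ_eq (k : ℕ) (hk : 1 ≤ k) : LZ k = (fun v => v ++ [false]) '' L2 k := by
  ext w
  constructor
  · rintro ⟨hm, hc, hne, hlast⟩
    have hlen : 1 ≤ w.length := count_pos_ne_nil hk hc
    have hrec : w = w.take (w.length - 1) ++ [false] := by
      apply eq_take_append w [false] (w.length - 1) (by simp; omega)
      intro i hi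
      have h0 : i = 0 := by simpa using hi
      subst h0
      exact hlast
    set v := w.take (w.length - 1) with hv
    have hvlen : v.length = w.length - 1 := by simp [hv]
    have hmv : MaxW v := maxW_strip (s := [false]) rfl (by rw [← hrec]; exact hm)
    have hwit := hm.2 (w.length - 1) (by omega) hlast
    have h2 : End2 v := by
      rcases hwit with ⟨h1, _⟩ | ⟨_, _, h1⟩ | ⟨h0, h1, h2⟩
      · exact absurd (lt_length_of_pad_eq_true h1) (by omega)
      · exact absurd (lt_length_of_pad_eq_true h1) (by omega)
      · refine ⟨by omega, ?_, ?_⟩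
        · rw [hvlen, show w.length - 1 - 1 = w.length - 1 - 1 from rfl]
          rw [pad_take (by omega)]
          rwa [show w.length - 1 - 1 = w.length - 1 - 1 from rfl]
        · rw [hvlen, pad_take (by omega)]
          rwa [show w.length - 1 - 2 = w.length - 1 - 2 from rfl]
    refine ⟨v, ⟨hmv, ?_, h2⟩, hrec.symm⟩
    · have := congrArg (List.count true) hrec
      rw [List.count_append] at this
      simpa [hc] using this.symm
  · rintro ⟨v, ⟨hmv, hcv, h2v⟩, rfl⟩
    refine ⟨maxW_append_f hmv h2v, ?_, ?_, ?_⟩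
    · rw [List.count_append]; simpa using hcv
    · simp
    · rw [show (v ++ [false]).length - 1 = v.length by simp,
        pad_append_right v _ le_rfl, Nat.sub_self]
      rfl

end RivProof

namespace RivProof

lemma L1_eq {k : ℕ} (hk : 2 ≤ k) : L1 k = (fun v => v ++ [false, true]) '' LB (k - 1) := by
  ext w
  constructor
  · rintro ⟨hm, hc, hB, hn2⟩
    have hlen : 2 ≤ w.length := le_trans hk (hc ▸ (List.count_le_length : w.count true ≤ w.length))
    have hf : pad w (w.length - 2) = false := by
      cases hv : pad w (w.length - 2)
      · rfl
      · exact absurd ⟨hlen, hB, hv⟩ hn2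
    have hrec : w = w.take (w.length - 2) ++ [false, true] := by
      apply eq_take_append w [false, true] (w.length - 2) (by simp; omega)
      intro i hi
      simp only [List.length_cons, List.length_nil] at hi
      interval_cases i
      · exact hf
      · rw [show w.length - 2 + 1 = w.length - 1 by omega]; exact hB
    set v := w.take (w.length - 2) with hv
    have hvlen : v.length = w.length - 2 := by simp [hv]
    have hmv : MaxW v := maxW_strip (s := [false, true]) rfl (by rw [← hrec]; exact hm)
    have hwit := hm.2 (w.length - 2) (by omega) hf
    have hBv : EndB v := by
      rcases hwit with ⟨h1, h2⟩ | ⟨h0, h1, _⟩ | ⟨h0, _, h2⟩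
      · have := lt_length_of_pad_eq_true h2
        rw [show w.length - 2 + 2 = w.length by omega] at this
        omega
      · unfold EndB
        rw [hvlen, pad_take (by omega)]
        rwa [show w.length - 2 - 1 = w.length - 2 - 1 from rfl]
      · unfold EndB
        rw [hvlen, pad_take (by omega)]
        rwa [show w.length - 2 - 1 = w.length - 2 - 1 from rfl]
    refine ⟨v, ⟨hmv, ?_, hBv⟩, hrec.symm⟩
    have := congrArg (List.count true) hrec
    rw [List.count_append] at this
    simp only [hc] at this
    have : k = v.count true + 1 := by simpa using this
    omega
  · rintro ⟨v, ⟨hmv, hcv, hBv⟩, rfl⟩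
    have hpos := endB_pos hBv
    refine ⟨maxW_append_ft hmv hBv, ?_, ?_, ?_⟩
    · rw [List.count_append]
      simp only [hcv]
      simp; omega
    · unfold EndB
      rw [show (v ++ [false, true]).length - 1 = v.length + 1 by simp,
        pad_append_right v _ (by omega), show v.length + 1 - v.length = 1 by omega]
      rfl
    · rintro ⟨_, _, h2⟩
      rw [show (v ++ [false, true]).length - 2 = v.length by simp,
        pad_append_right v _ le_rfl, Nat.sub_self] at h2
      simp [pad] at h2

lemma L2_eq {k : ℕ} (hk : 3 ≤ k) :
    L2 k = (fun v => v ++ [false, true, true]) '' LB (k - 2) ∪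
           (fun v => v ++ [false, false, true, true]) '' L2 (k - 2) := by
  ext w
  constructor
  · rintro ⟨hm, hc, hl2, hB1, hB2⟩
    have hlen : 3 ≤ w.length := le_trans hk (hc ▸ (List.count_le_length : w.count true ≤ w.length))
    have hf3 : pad w (w.length - 3) = false := by
      cases hv : pad w (w.length - 3)
      · rfl
      · exfalso
        apply hm.1 (w.length - 3)
        refine ⟨hv, ?_, ?_⟩
        · rwa [show w.length - 3 + 1 = w.length - 2 by omega]
        · rwa [show w.length - 3 + 2 = w.length - 1 by omega]
    have hlen4 : 4 ≤ w.length := by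
      -- count ≤ length - 1 because position length-3 is false
      have hsub : trues w ⊆ (Finset.range w.length).erase (w.length - 3) := by
        intro x hx
        have hpx := mem_trues.1 hx
        refine Finset.mem_erase.2 ⟨?_, Finset.mem_range.2 (lt_length_of_pad_eq_true hpx)⟩
        intro he
        rw [he, hf3] at hpx
        exact Bool.false_ne_true hpx
      have := Finset.card_le_card hsub
      rw [Finset.card_erase_of_mem (Finset.mem_range.2 (by omega)), Finset.card_range] at this
      rw [← count_eq_card_trues, hc] at this
      omega
    cases hv4 : pad w (w.length - 4)
    · -- gap of size 2 before the final block
      have hwit := hm.2 (w.length - 4) (by omega) hv4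
      have hcase : 2 ≤ w.length - 4 ∧ pad w (w.length - 6) = true ∧
          pad w (w.length - 5) = true := by
        rcases hwit with ⟨h1, _⟩ | ⟨_, _, h1⟩ | ⟨h0, h1, h2⟩
        · rw [show w.length - 4 + 1 = w.length - 3 by omega, hf3] at h1
          exact absurd h1 (by simp)
        · rw [show w.length - 4 + 1 = w.length - 3 by omega, hf3] at h1
          exact absurd h1 (by simp)
        · exact ⟨h0, by rwa [show w.length - 4 - 2 = w.length - 6 by omega] at h1,
            by rwa [show w.length - 4 - 1 = w.length - 5 by omega] at h2⟩
      obtain ⟨hl6, h6, h5⟩ := hcase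
      have hrec : w = w.take (w.length - 4) ++ [false, false, true, true] := by
        apply eq_take_append w _ (w.length - 4) (by simp; omega)
        intro i hi
        simp only [List.length_cons, List.length_nil] at hi
        interval_cases i
        · exact hv4
        · rw [show w.length - 4 + 1 = w.length - 3 by omega]; exact hf3
        · rw [show w.length - 4 + 2 = w.length - 2 by omega]; exact hB2
        · rw [show w.length - 4 + 3 = w.length - 1 by omega]; exact hB1
      set v := w.take (w.length - 4) with hv
      have hvlen : v.length = w.length - 4 := by simp [hv]
      have hmv : MaxW v := maxW_strip (s := [false, false, true, true]) rfl
        (by rw [← hrec]; exact hm)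
      refine Or.inr ⟨v, ⟨hmv, ?_, ?_⟩, hrec.symm⟩
      · have := congrArg (List.count true) hrec
        rw [List.count_append] at this
        simp only [hc] at this
        have : k = v.count true + 2 := by simpa using this
        omega
      · refine ⟨by omega, ?_, ?_⟩
        · rw [hvlen, pad_take (by omega), show w.length - 4 - 1 = w.length - 5 by omega]
          exact h5
        · rw [hvlen, pad_take (by omega), show w.length - 4 - 2 = w.length - 6 by omega]
          exact h6
    · -- gap of size 1
      have hrec : w = w.take (w.length - 3) ++ [false, true, true] := by
        apply eq_take_append w _ (w.length - 3) (by simp; omega)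
        intro i hi
        simp only [List.length_cons, List.length_nil] at hi
        interval_cases i
        · exact hf3
        · rw [show w.length - 3 + 1 = w.length - 2 by omega]; exact hB2
        · rw [show w.length - 3 + 2 = w.length - 1 by omega]; exact hB1
      set v := w.take (w.length - 3) with hv
      have hvlen : v.length = w.length - 3 := by simp [hv]
      have hmv : MaxW v := maxW_strip (s := [false, true, true]) rfl
        (by rw [← hrec]; exact hm)
      refine Or.inl ⟨v, ⟨hmv, ?_, ?_⟩, hrec.symm⟩
      · have := congrArg (List.count true) hrec
        rw [List.count_append] at this
        simp only [hc] at this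
        have : k = v.count true + 2 := by simpa using this
        omega
      · unfold EndB
        rw [hvlen, pad_take (by omega), show w.length - 3 - 1 = w.length - 4 by omega]
        exact hv4
  · rintro (⟨v, ⟨hmv, hcv, hBv⟩, rfl⟩ | ⟨v, ⟨hmv, hcv, h2v⟩, rfl⟩)
    · have hpos := endB_pos hBv
      refine ⟨maxW_append_ftt hmv hBv, ?_, by simp, ?_, ?_⟩
      · rw [List.count_append]
        simp only [hcv]
        simp; omega
      · rw [show (v ++ [false, true, true]).length - 1 = v.length + 2 by simp,
          pad_append_right v _ (by omega), show v.length + 2 - v.length = 2 by omega]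
        rfl
      · rw [show (v ++ [false, true, true]).length - 2 = v.length + 1 by simp,
          pad_append_right v _ (by omega), show v.length + 1 - v.length = 1 by omega]
        rfl
    · refine ⟨maxW_append_fftt hmv h2v, ?_, by simp, ?_, ?_⟩
      · rw [List.count_append]
        simp only [hcv]
        simp; omega
      · rw [show (v ++ [false, false, true, true]).length - 1 = v.length + 3 by simp,
          pad_append_right v _ (by omega), show v.length + 3 - v.length = 3 by omega]
        rfl
      · rw [show (v ++ [false, false, true, true]).length - 2 = v.length + 2 by simp,
          pad_append_right v _ (by omega), show v.length + 2 - v.length = 2 by omega]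
        rfl

lemma disj_images {k k' : ℕ} :
    Disjoint ((fun v => v ++ [false, true, true]) '' LB k)
      ((fun v => v ++ [false, false, true, true]) '' L2 k') := by
  rw [Set.disjoint_left]
  rintro w ⟨v1, ⟨_, _, hB1⟩, rfl⟩ ⟨v2, ⟨_, _, _⟩, he⟩
  have hpos := endB_pos hB1
  have he' : v2 ++ [false, false, true, true] = v1 ++ [false, true, true] := he
  have hlen : v1.length + 3 = v2.length + 4 := by
    have := congrArg List.length he'
    simpa using this.symm
  have h1 : pad (v1 ++ [false, true, true]) (v1.length - 1) = true := by
    rw [pad_append_left _ (by omega)]; exact hB1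
  rw [← he'] at h1
  have h2 : pad (v2 ++ [false, false, true, true]) (v2.length) = false := by
    rw [pad_append_right _ _ le_rfl, Nat.sub_self]; rfl
  rw [show v2.length = v1.length - 1 by omega] at h2
  rw [h2] at h1
  exact Bool.false_ne_true h1

end RivProof

namespace RivProof

instance (w : List Bool) : Decidable (End2 w) := by unfold End2; infer_instance
instance (w : List Bool) : Decidable (EndB w) := by unfold EndB; infer_instance
instance (w : List Bool) : Decidable (End1 w) := by unfold End1; infer_instance
instance (w : List Bool) : Decidable (EndZ w) := by unfold EndZ; infer_instance

lemma L1_one : L1 1 = {[true]} := by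
  ext w
  constructor
  · rintro ⟨hm, hc, hB, hn2⟩
    have hlen : 1 ≤ w.length := count_pos_ne_nil le_rfl hc
    have hlen1 : w.length = 1 := by
      by_contra hne
      have hlen2 : 2 ≤ w.length := by omega
      have hf : pad w (w.length - 2) = false := by
        cases hv : pad w (w.length - 2)
        · rfl
        · have := two_trues (i := w.length - 2) (j := w.length - 1) (by omega) hv hB
          omega
      have hwit := hm.2 (w.length - 2) (by omega) hf
      rcases hwit with ⟨h1, h2⟩ | ⟨h0, h1, _⟩ | ⟨h0, h1, h2⟩
      · have := lt_length_of_pad_eq_true h2; omega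
      · rw [show w.length - 2 - 1 = w.length - 3 by omega] at h1
        have := two_trues (i := w.length - 3) (j := w.length - 1) (by omega) h1 hB
        omega
      · rw [show w.length - 2 - 1 = w.length - 3 by omega] at h2
        have := two_trues (i := w.length - 3) (j := w.length - 1) (by omega) h2 hB
        omega
    have hrec : w = w.take 0 ++ [true] := by
      apply eq_take_append w [true] 0 (by simpa using hlen1.symm)
      intro i hi
      have h0 : i = 0 := by simpa using hi
      subst h0
      have : pad w (w.length - 1) = true := hB
      rw [hlen1] at this
      exact this
    simpa using hrec
  · rintro rfl
    refine ⟨by decide, by decide, by decide, by decide⟩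

lemma L2_one : L2 1 = ∅ := by
  ext w
  simp only [Set.mem_empty_iff_false, iff_false]
  rintro ⟨hm, hc, hl2, h1, h2⟩
  have := two_trues (i := w.length - 2) (j := w.length - 1) (by omega) h2 h1
  omega

lemma L2_two : L2 2 = {[true, true], [false, true, true]} := by
  ext w
  constructor
  · rintro ⟨hm, hc, hl2, h1, h2⟩
    have hlenle : w.length ≤ 3 := by
      by_contra hgt
      push_neg at hgt
      have hf3 : pad w (w.length - 3) = false := by
        cases hv : pad w (w.length - 3)
        · rfl
        · have := three_trues (i := w.length - 3) (j := w.length - 2) (l := w.length - 1)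
            (by omega) (by omega) (by omega) hv h2 h1
          omega
      have hf4 : pad w (w.length - 4) = false := by
        cases hv : pad w (w.length - 4)
        · rfl
        · have := three_trues (i := w.length - 4) (j := w.length - 2) (l := w.length - 1)
            (by omega) (by omega) (by omega) hv h2 h1
          omega
      have hwit := hm.2 (w.length - 4) (by omega) hf4
      rcases hwit with ⟨ha, _⟩ | ⟨h0, _, ha⟩ | ⟨h0, ha, hb⟩
      · rw [show w.length - 4 + 1 = w.length - 3 by omega, hf3] at ha
        exact Bool.false_ne_true ha
      · rw [show w.length - 4 + 1 = w.length - 3 by omega, hf3] at ha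
        exact Bool.false_ne_true ha
      · rw [show w.length - 4 - 1 = w.length - 5 by omega] at hb
        have := three_trues (i := w.length - 5) (j := w.length - 2) (l := w.length - 1)
          (by omega) (by omega) (by omega) hb h2 h1
        omega
    rcases (by omega : w.length = 2 ∨ w.length = 3) with hl | hl
    · have hrec : w = w.take 0 ++ [true, true] := by
        apply eq_take_append w [true, true] 0 (by simpa using hl.symm)
        intro i hi
        simp only [List.length_cons, List.length_nil] at hi
        interval_cases i
        · have := h2; rw [hl] at this; exact this
        · have := h1; rw [hl] at this; exact this
      simp only [List.take_zero, List.nil_append] at hrec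
      exact Or.inl hrec
    · have hf0 : pad w 0 = false := by
        cases hv : pad w 0
        · rfl
        · have := three_trues (i := 0) (j := w.length - 2) (l := w.length - 1)
            (by omega) (by omega) (by omega) hv h2 h1
          omega
      have hrec : w = w.take 0 ++ [false, true, true] := by
        apply eq_take_append w [false, true, true] 0 (by simpa using hl.symm)
        intro i hi
        simp only [List.length_cons, List.length_nil] at hi
        interval_cases i
        · exact hf0
        · have := h2; rw [hl] at this; exact this
        · have := h1; rw [hl] at this; exact this
      simp only [List.take_zero, List.nil_append] at hrec
      exact Or.inr hrec
  · rintro (rfl | rfl)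
    · exact ⟨by decide, by decide, by decide, by decide, by decide⟩
    · exact ⟨by decide, by decide, by decide, by decide, by decide⟩

end RivProof

namespace RivProof

instance : DecidableRel PEdge := fun a b => by unfold PEdge; infer_instance

/-- walk predicate -/
def WP (m : ℕ) (v : Fin 3) (w : Fin (m+1) → Fin 3) : Prop :=
  w 0 = 0 ∧ w (Fin.last m) = v ∧ ∀ t : Fin m, PEdge (w t.castSucc) (w t.succ)

instance (m v) : DecidablePred (WP m v) := fun w => by unfold WP; infer_instance

def walkSet (m : ℕ) (v : Fin 3) := {w : Fin (m+1) → Fin 3 // WP m v w}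

instance (m v) : Fintype (walkSet m v) := by unfold walkSet; infer_instance

lemma wInit_mem {m : ℕ} {v : Fin 3} {w : Fin (m+2) → Fin 3} (h : WP (m+1) v w) :
    WP m (w (Fin.last m).castSucc) (Fin.init w) := by
  obtain ⟨h0, hl, he⟩ := h
  refine ⟨?_, rfl, ?_⟩
  · simpa [Fin.init] using h0
  · intro t
    have := he t.castSucc
    simp only [Fin.init]
    rwa [← Fin.succ_castSucc]

lemma wInit_edge {m : ℕ} {v : Fin 3} {w : Fin (m+2) → Fin 3} (h : WP (m+1) v w) :
    PEdge (w (Fin.last m).castSucc) v := by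
  obtain ⟨h0, hl, he⟩ := h
  have := he (Fin.last m)
  rwa [Fin.succ_last, hl] at this

lemma wSnoc_mem {m : ℕ} {u v : Fin 3} {w : Fin (m+1) → Fin 3} (h : WP m u w)
    (he : PEdge u v) : WP (m+1) v (Fin.snoc w v) := by
  obtain ⟨h0, hl, hed⟩ := h
  refine ⟨?_, by simp, ?_⟩
  · rw [show (0 : Fin (m+2)) = Fin.castSucc 0 by simp, Fin.snoc_castSucc]
    exact h0
  · intro t
    induction t using Fin.lastCases with
    | last =>
      rw [Fin.succ_last, Fin.snoc_last, Fin.snoc_castSucc, hl]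
      exact he
    | cast i =>
      rw [Fin.succ_castSucc, Fin.snoc_castSucc, Fin.snoc_castSucc]
      exact hed i

end RivProof



namespace RivProof

lemma card_fiber (m : ℕ) (v u : Fin 3) :
    (Finset.univ.filter fun w : Fin (m+2) → Fin 3 =>
        WP (m+1) v w ∧ w (Fin.last m).castSucc = u).card =
      if PEdge u v then (Finset.univ.filter fun w : Fin (m+1) → Fin 3 => WP m u w).card
        else 0 := by
  classical
  split_ifs with he
  · apply Finset.card_bij (fun w _ => Fin.init w)
    · intro w hw
      obtain ⟨hw1, hw2⟩ := (Finset.mem_filter.1 hw).2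
      apply Finset.mem_filter.2
      refine ⟨Finset.mem_univ _, ?_⟩
      have := wInit_mem hw1
      rwa [hw2] at this
    · intro w1 hw1 w2 hw2 h
      obtain ⟨h11, _⟩ := (Finset.mem_filter.1 hw1).2
      obtain ⟨h21, _⟩ := (Finset.mem_filter.1 hw2).2
      have e1 : w1 = Fin.snoc (Fin.init w1) v := by
        rw [← h11.2.1]; exact (Fin.snoc_init_self w1).symm
      have e2 : w2 = Fin.snoc (Fin.init w2) v := by
        rw [← h21.2.1]; exact (Fin.snoc_init_self w2).symm
      rw [e1, e2, h]
    · intro y hy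
      have hy' := (Finset.mem_filter.1 hy).2
      refine ⟨Fin.snoc y v, Finset.mem_filter.2 ⟨Finset.mem_univ _, wSnoc_mem hy' he, ?_⟩, ?_⟩
      · rw [Fin.snoc_castSucc]
        exact hy'.2.1
      · exact Fin.init_snoc (α := fun _ => Fin 3) v y
  · rw [Finset.card_eq_zero, Finset.filter_eq_empty_iff]
    rintro w _ ⟨hw1, hw2⟩
    have := wInit_edge hw1
    rw [hw2] at this
    exact he this

lemma card_step (m : ℕ) (v : Fin 3) :
    (Finset.univ.filter fun w : Fin (m+2) → Fin 3 => WP (m+1) v w).card =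
      ∑ u : Fin 3, if PEdge u v then
        (Finset.univ.filter fun w : Fin (m+1) → Fin 3 => WP m u w).card else 0 := by
  classical
  rw [Finset.card_eq_sum_card_fiberwise
    (f := fun w : Fin (m+2) → Fin 3 => w (Fin.last m).castSucc)
    (t := Finset.univ) (fun x _ => Finset.mem_univ _)]
  apply Finset.sum_congr rfl
  intro u _
  rw [Finset.filter_filter, ← card_fiber m v u]

def wkv : ℕ → ℕ × ℕ × ℕ
  | 0 => (1, 0, 0)
  | (m+1) => ((wkv m).2.1, (wkv m).1 + (wkv m).2.2, (wkv m).2.1 + (wkv m).2.2)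

lemma card_walkSet (m : ℕ) :
    ((Finset.univ.filter fun w : Fin (m+1) → Fin 3 => WP m 0 w).card = (wkv m).1) ∧
    ((Finset.univ.filter fun w : Fin (m+1) → Fin 3 => WP m 1 w).card = (wkv m).2.1) ∧
    ((Finset.univ.filter fun w : Fin (m+1) → Fin 3 => WP m 2 w).card = (wkv m).2.2) := by
  induction m with
  | zero => refine ⟨?_, ?_, ?_⟩ <;> decide
  | succ m ih =>
    obtain ⟨h0, h1, h2⟩ := ih
    refine ⟨?_, ?_, ?_⟩ <;> rw [card_step, Fin.sum_univ_three]
    · rw [if_neg (by decide), if_pos (by decide), if_neg (by decide), h1]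
      simp [wkv]
    · rw [if_pos (by decide), if_neg (by decide), if_pos (by decide), h0, h2]
      simp [wkv]
    · rw [if_neg (by decide), if_pos (by decide), if_pos (by decide), h1, h2]
      simp [wkv]

end RivProof

namespace RivProof

lemma finite_L1 (k : ℕ) : (L1 k).Finite :=
  (finite_Lall k).subset (fun w hw => ⟨hw.1, hw.2.1⟩)
lemma finite_L2 (k : ℕ) : (L2 k).Finite :=
  (finite_Lall k).subset (fun w hw => ⟨hw.1, hw.2.1⟩)
lemma finite_LZ (k : ℕ) : (LZ k).Finite :=
  (finite_Lall k).subset (fun w hw => ⟨hw.1, hw.2.1⟩)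
lemma finite_LB (k : ℕ) : (LB k).Finite :=
  (finite_Lall k).subset (fun w hw => ⟨hw.1, hw.2.1⟩)

lemma ncard_LZ (k : ℕ) (hk : 1 ≤ k) : (LZ k).ncard = (L2 k).ncard := by
  rw [LZ_eq k hk]
  exact Set.ncard_image_of_injective _ (List.append_left_injective [false])

lemma ncard_LB (k : ℕ) : (LB k).ncard = (L1 k).ncard + (L2 k).ncard := by
  rw [LB_eq, Set.ncard_union_eq (disj_L1_L2 k k) (finite_L1 k) (finite_L2 k)]

lemma ncard_Lall (k : ℕ) (hk : 1 ≤ k) :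
    (Lall k).ncard = (L1 k).ncard + (L2 k).ncard + (L2 k).ncard := by
  rw [partition_Lall hk,
    Set.ncard_union_eq (disj_LB_LZ k k) ((finite_L1 k).union (finite_L2 k)) (finite_LZ k),
    Set.ncard_union_eq (disj_L1_L2 k k) (finite_L1 k) (finite_L2 k), ncard_LZ k hk]

lemma ncard_L1_rec (k : ℕ) (hk : 2 ≤ k) :
    (L1 k).ncard = (L1 (k-1)).ncard + (L2 (k-1)).ncard := by
  rw [L1_eq hk, Set.ncard_image_of_injective _ (List.append_left_injective _), ncard_LB]

lemma ncard_L2_rec (k : ℕ) (hk : 3 ≤ k) :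
    (L2 k).ncard = ((L1 (k-2)).ncard + (L2 (k-2)).ncard) + (L2 (k-2)).ncard := by
  rw [L2_eq hk,
    Set.ncard_union_eq disj_images ((finite_LB _).image _) ((finite_L2 _).image _),
    Set.ncard_image_of_injective _ (List.append_left_injective _),
    Set.ncard_image_of_injective _ (List.append_left_injective _), ncard_LB]

lemma ncard_L1_one : (L1 1).ncard = 1 := by rw [L1_one]; exact Set.ncard_singleton _
lemma ncard_L2_one : (L2 1).ncard = 0 := by rw [L2_one]; exact Set.ncard_empty _
lemma ncard_L2_two : (L2 2).ncard = 2 := by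
  rw [L2_two]
  rw [Set.ncard_pair (by decide)]

/-- the key numeric invariant -/
lemma numeric_inv : ∀ k : ℕ, 1 ≤ k →
    (L1 k).ncard + (L2 k).ncard = (wkv (k+2)).2.2 ∧ (L2 k).ncard = (wkv (k+2)).1 := by
  intro k
  induction k using Nat.strong_induction_on with
  | _ k ih =>
    intro hk
    match k, hk with
    | 1, _ =>
      rw [ncard_L1_one, ncard_L2_one]
      constructor <;> simp [wkv]
    | 2, _ =>
      have h12 : (L1 2).ncard = 1 := by
        rw [ncard_L1_rec 2 le_rfl]
        simp [ncard_L1_one, ncard_L2_one]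
      rw [h12, ncard_L2_two]
      constructor <;> simp [wkv]
    | (j+3), _ =>
      have ih1 := ih (j+1) (by omega) (by omega)
      have ih2 := ih (j+2) (by omega) (by omega)
      have r1 : (L1 (j+3)).ncard = (L1 (j+2)).ncard + (L2 (j+2)).ncard := by
        have := ncard_L1_rec (j+3) (by omega)
        simpa using this
      have r2 : (L2 (j+3)).ncard = ((L1 (j+1)).ncard + (L2 (j+1)).ncard) + (L2 (j+1)).ncard := by
        have := ncard_L2_rec (j+3) (by omega)
        simpa using this
      have w1 : (wkv (j+3+2)).1 = (wkv (j+2+2)).2.1 := by simp [wkv]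
      have w2 : (wkv (j+2+2)).2.1 = (wkv (j+1+2)).1 + (wkv (j+1+2)).2.2 := by simp [wkv]
      have w3 : (wkv (j+3+2)).2.2 = (wkv (j+2+2)).2.1 + (wkv (j+2+2)).2.2 := by simp [wkv]
      omega

lemma ncard_Lall_eq (k : ℕ) (hk : 1 ≤ k) : (Lall k).ncard = (wkv (k+4)).1 := by
  have h := numeric_inv k hk
  have w1 : (wkv (k+4)).1 = (wkv (k+3)).2.1 := by simp [wkv]
  have w2 : (wkv (k+3)).2.1 = (wkv (k+2)).1 + (wkv (k+2)).2.2 := by simp [wkv]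
  rw [ncard_Lall k hk]
  omega

end RivProof

namespace RivProof

def toConf (w : List Bool) : ℕ × (ℤ → Bool) :=
  (w.length, fun j => if 0 ≤ j then pad w j.toNat else false)

def toWord (p : ℕ × (ℤ → Bool)) : List Bool := List.ofFn (fun i : Fin p.1 => p.2 i)

lemma toWord_length (p : ℕ × (ℤ → Bool)) : (toWord p).length = p.1 := by
  simp [toWord]

lemma pad_toWord (p : ℕ × (ℤ → Bool)) (i : ℕ) :
    pad (toWord p) i = if h : i < p.1 then p.2 i else false := by
  split_ifs with h
  · rw [pad_eq_getElem (by simpa [toWord] using h)]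
    simp [toWord]
  · exact pad_eq_false_of_le (by simpa [toWord] using Nat.le_of_not_lt h)

lemma toConf_val (w : List Bool) (j : ℤ) :
    (toConf w).2 j = if 0 ≤ j then pad w j.toNat else false := rfl

/-- occupancy equals count for configurations supported on `[0, n)` -/
lemma occupancy_eq (n : ℕ) (c : ℤ → Bool) (hconf : RivieraConfig n c) :
    rivieraOccupancy n c = (toWord (n, c)).count true := by
  rw [count_eq_card_trues]
  unfold rivieraOccupancy trues
  apply Finset.card_bij (fun a _ => a.toNat)
  · intro a ha
    obtain ⟨hmem, hc⟩ := Finset.mem_filter.1 ha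
    rw [Finset.mem_Ico] at hmem
    apply Finset.mem_filter.2
    refine ⟨Finset.mem_range.2 ?_, ?_⟩
    · rw [toWord_length]; omega
    · rw [pad_toWord]
      rw [dif_pos (by omega : a.toNat < (n, c).1)]
      show c ((a.toNat : ℕ) : ℤ) = true
      rwa [Int.toNat_of_nonneg hmem.1]
  · intro a ha b hb h
    obtain ⟨hmem, _⟩ := Finset.mem_filter.1 ha
    obtain ⟨hmem', _⟩ := Finset.mem_filter.1 hb
    rw [Finset.mem_Ico] at hmem hmem'
    omega
  · intro b hb
    obtain ⟨hmem, hc⟩ := Finset.mem_filter.1 hb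
    rw [Finset.mem_range, toWord_length] at hmem
    rw [pad_toWord, dif_pos hmem] at hc
    refine ⟨(b : ℤ), Finset.mem_filter.2 ⟨Finset.mem_Ico.2 ⟨by omega, by omega⟩, hc⟩, by omega⟩

/-- forward: a maximal word gives an element of the configuration set -/
lemma toConf_mem {w : List Bool} (hm : MaxW w) :
    RivieraConfig (toConf w).1 (toConf w).2 ∧ RivieraMaximal (toConf w).1 (toConf w).2 ∧
      rivieraOccupancy (toConf w).1 (toConf w).2 = w.count true := by
  set n := w.length with hn
  have hval : ∀ j : ℤ, (toConf w).2 j = if 0 ≤ j then pad w j.toNat else false := toConf_val w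
  have hfst : (toConf w).1 = n := rfl
  have hconf : RivieraConfig (toConf w).1 (toConf w).2 := by
    intro j hj
    rw [hval]
    rcases hj with hj | hj
    · rw [if_neg (by omega)]
    · rw [if_pos (by omega)]
      apply pad_eq_false_of_le
      show n ≤ j.toNat
      omega
  have htrue : ∀ j : ℤ, (toConf w).2 j = true → 0 ≤ j := by
    intro j hj
    by_contra hneg
    rw [hval, if_neg hneg] at hj
    exact Bool.false_ne_true hj
  refine ⟨hconf, ⟨?_, ?_⟩, ?_⟩
  · -- permissible
    rintro ⟨i, h1, h2, h3⟩
    have hi1 : 0 ≤ i - 1 := htrue _ h1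
    set m := (i - 1).toNat with hmm
    apply hm.1 m
    refine ⟨?_, ?_, ?_⟩
    · rw [hval, if_pos hi1] at h1; exact h1
    · rw [hval, if_pos (by omega)] at h2
      rwa [show i.toNat = m + 1 by omega] at h2
    · rw [hval, if_pos (by omega)] at h3
      rwa [show (i+1).toNat = m + 2 by omega] at h3
  · -- maximality
    intro j hj0 hjn hjf
    set m := j.toNat with hmm
    have hjm : j = (m : ℤ) := by omega
    have hpadf : pad w m = false := by
      rw [hval, if_pos hj0] at hjf; exact hjf
    have hwit := hm.2 m (by omega) hpadf
    intro hperm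
    have upd : ∀ x : ℤ, Function.update (toConf w).2 j true x =
        if x = j then true else (toConf w).2 x := fun x => Function.update_apply _ _ _ _
    rcases hwit with ⟨h1, h2⟩ | ⟨h0, h1, h2⟩ | ⟨h0, h1, h2⟩
    · apply hperm
      refine ⟨j + 1, ?_, ?_, ?_⟩
      · rw [show j + 1 - 1 = j by ring, upd, if_pos rfl]
      · rw [upd, if_neg (by omega), hval, if_pos (by omega)]
        rwa [show (j+1).toNat = m + 1 by omega]
      · rw [upd, if_neg (by omega), hval, if_pos (by omega)]
        rwa [show (j+1+1).toNat = m + 2 by omega]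
    · apply hperm
      refine ⟨j, ?_, ?_, ?_⟩
      · rw [upd, if_neg (by omega), hval, if_pos (by omega)]
        rwa [show (j-1).toNat = m - 1 by omega]
      · rw [upd, if_pos rfl]
      · rw [upd, if_neg (by omega), hval, if_pos (by omega)]
        rwa [show (j+1).toNat = m + 1 by omega]
    · apply hperm
      refine ⟨j - 1, ?_, ?_, ?_⟩
      · rw [upd, if_neg (by omega), hval, if_pos (by omega)]
        rwa [show (j-1-1).toNat = m - 2 by omega]
      · rw [upd, if_neg (by omega), hval, if_pos (by omega)]
        rwa [show (j-1).toNat = m - 1 by omega]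
      · rw [show j - 1 + 1 = j by ring, upd, if_pos rfl]
  · -- occupancy
    rw [show rivieraOccupancy (toConf w).1 (toConf w).2 = rivieraOccupancy n (toConf w).2 from rfl,
      occupancy_eq n (toConf w).2 hconf]
    congr 1
    apply List.ext_getElem (by simp [toWord, toConf, hn])
    intro i h1 h2
    rw [← pad_eq_getElem h2, ← pad_eq_getElem h1]
    have h2' : i < n := by simpa [toWord, toConf] using h2
    rw [pad_toWord]
    rw [dif_pos (show i < (n, (toConf w).2).1 from h2')]
    show (toConf w).2 (i : ℤ) = pad w i
    rw [hval, if_pos (by omega)]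
    norm_num

end RivProof

namespace RivProof

lemma maxW_toWord {n : ℕ} {c : ℤ → Bool} (hconf : RivieraConfig n c)
    (hmax : RivieraMaximal n c) : MaxW (toWord (n, c)) := by
  have hlen : (toWord (n, c)).length = n := toWord_length _
  have hpad : ∀ i : ℕ, pad (toWord (n, c)) i = if i < n then c i else false := by
    intro i
    rw [pad_toWord]
    rfl
  have hctrue : ∀ j : ℤ, c j = true → 0 ≤ j ∧ j < (n : ℤ) := by
    intro j hj
    by_contra hcon
    rw [hconf j (by omega)] at hj
    exact Bool.false_ne_true hj
  have hpad' : ∀ i : ℕ, c (i : ℤ) = true → pad (toWord (n, c)) i = true := by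
    intro i hi
    have := (hctrue _ hi).2
    rw [hpad, if_pos (by omega)]
    exact hi
  constructor
  · -- permissible
    intro i ⟨h1, h2, h3⟩
    rw [hpad] at h1 h2 h3
    split_ifs at h1 h2 h3
    apply hmax.1
    refine ⟨(i : ℤ) + 1, ?_, ?_, ?_⟩
    · rw [show (i : ℤ) + 1 - 1 = (i : ℤ) by ring]; exact h1
    · rwa [show ((i : ℤ) + 1) = ((i + 1 : ℕ) : ℤ) by push_cast; ring]
    · rwa [show ((i : ℤ) + 1 + 1) = ((i + 2 : ℕ) : ℤ) by push_cast; ring]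
  · -- witnesses
    intro j hj hjf
    rw [hlen] at hj
    rw [hpad, if_pos hj] at hjf
    have hnp := hmax.2 (j : ℤ) (by omega) (by omega) hjf
    rw [RivieraPermissible, not_not] at hnp
    obtain ⟨i, h1, h2, h3⟩ := hnp
    have upd : ∀ x : ℤ, Function.update c (j : ℤ) true x =
        if x = (j : ℤ) then true else c x := fun x => Function.update_apply _ _ _ _
    rw [upd] at h1 h2 h3
    have hij : i - 1 = (j : ℤ) ∨ i = (j : ℤ) ∨ i + 1 = (j : ℤ) := by
      by_contra hno
      push_neg at hno
      rw [if_neg hno.1] at h1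
      rw [if_neg hno.2.1] at h2
      rw [if_neg hno.2.2] at h3
      exact hmax.1 ⟨i, h1, h2, h3⟩
    rcases hij with he | he | he
    · -- j, j+1, j+2 pattern : case 1
      rw [if_neg (by omega)] at h2
      rw [if_neg (by omega)] at h3
      have hb2 := hctrue _ h2
      have hb3 := hctrue _ h3
      refine Or.inl ⟨?_, ?_⟩
      · exact hpad' _ (by rwa [show ((j+1:ℕ) : ℤ) = i by omega])
      · exact hpad' _ (by rwa [show ((j+2:ℕ) : ℤ) = i + 1 by omega])
    · -- case 2
      rw [if_neg (by omega)] at h1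
      rw [if_neg (by omega)] at h3
      have hb1 := hctrue _ h1
      refine Or.inr (Or.inl ⟨by omega, ?_, ?_⟩)
      · exact hpad' _ (by rwa [show ((j-1:ℕ) : ℤ) = i - 1 by omega])
      · exact hpad' _ (by rwa [show ((j+1:ℕ) : ℤ) = i + 1 by omega])
    · -- case 3
      rw [if_neg (by omega)] at h1
      rw [if_neg (by omega)] at h2
      have hb1 := hctrue _ h1
      refine Or.inr (Or.inr ⟨by omega, ?_, ?_⟩)
      · exact hpad' _ (by rwa [show ((j-2:ℕ) : ℤ) = i - 1 by omega])
      · exact hpad' _ (by rwa [show ((j-1:ℕ) : ℤ) = i by omega])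

lemma toConf_toWord {n : ℕ} {c : ℤ → Bool} (hconf : RivieraConfig n c) :
    toConf (toWord (n, c)) = (n, c) := by
  have hlen : (toWord (n, c)).length = n := toWord_length _
  unfold toConf
  ext j
  · simpa using hlen
  · show (if 0 ≤ j then pad (toWord (n, c)) j.toNat else false) = c j
    split_ifs with h
    · rw [pad_toWord]
      split_ifs with h2
      · show c ((j.toNat : ℕ) : ℤ) = c j
        rw [Int.toNat_of_nonneg h]
      · have h2' : ¬ j.toNat < n := h2
        rw [hconf j (by omega)]
    · rw [hconf j (by omega)]

lemma toWord_toConf (w : List Bool) : toWord (toConf w) = w := by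
  apply List.ext_getElem (by simp [toWord, toConf])
  intro i h1 h2
  rw [← pad_eq_getElem h1, ← pad_eq_getElem h2, pad_toWord]
  rw [dif_pos (show i < (toConf w).1 by simpa [toWord, toConf] using h1)]
  rw [toConf_val, if_pos (by omega)]
  norm_num

end RivProof

namespace RivProof

lemma toConf_injective : Function.Injective toConf := by
  intro a b h
  rw [← toWord_toConf a, ← toWord_toConf b, h]

lemma S_eq (k : ℕ) :
    {p : ℕ × (ℤ → Bool) |
        RivieraConfig p.1 p.2 ∧ RivieraMaximal p.1 p.2 ∧ rivieraOccupancy p.1 p.2 = k} =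
      toConf '' (Lall k) := by
  ext p
  constructor
  · rintro ⟨hconf, hmax, hocc⟩
    refine ⟨toWord (p.1, p.2), ⟨maxW_toWord hconf hmax, ?_⟩, toConf_toWord hconf⟩
    rw [← occupancy_eq p.1 p.2 hconf]
    exact hocc
  · rintro ⟨w, ⟨hm, hc⟩, rfl⟩
    obtain ⟨h1, h2, h3⟩ := toConf_mem hm
    exact ⟨h1, h2, by rw [h3, hc]⟩

end RivProof

theorem rivieraOccupancy_count_eq_walkCount (k : ℕ) (hk : 1 ≤ k) :
    {p : ℕ × (ℤ → Bool) |
        RivieraConfig p.1 p.2 ∧ RivieraMaximal p.1 p.2 ∧ rivieraOccupancy p.1 p.2 = k}.Finite ∧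
    {p : ℕ × (ℤ → Bool) |
        RivieraConfig p.1 p.2 ∧ RivieraMaximal p.1 p.2 ∧ rivieraOccupancy p.1 p.2 = k}.ncard =
      Nat.card {w : Fin (k + 5) → Fin 3 //
        w 0 = 0 ∧ w (Fin.last (k + 4)) = 0 ∧
        ∀ t : Fin (k + 4), PEdge (w t.castSucc) (w t.succ)} := by
  open RivProof in
  constructor
  · rw [RivProof.S_eq k]
    exact (RivProof.finite_Lall k).image _
  · rw [RivProof.S_eq k, Set.ncard_image_of_injective _ RivProof.toConf_injective,
      RivProof.ncard_Lall_eq k hk]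
    have h1 : Nat.card {w : Fin (k + 5) → Fin 3 //
        w 0 = 0 ∧ w (Fin.last (k + 4)) = 0 ∧
        ∀ t : Fin (k + 4), PEdge (w t.castSucc) (w t.succ)} =
        Fintype.card {w : Fin (k + 4 + 1) → Fin 3 // RivProof.WP (k+4) 0 w} := by
      rw [Nat.card_eq_fintype_card]
      exact Fintype.card_congr (Equiv.cast rfl)
    rw [h1, Fintype.card_subtype]
    have h2 := (RivProof.card_walkSet (k+4)).1
    rw [← h2]
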